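/- Let ρ and σ be density matrices on nonempty finite types ι and let 0 ≤ δ ≤ 1. If D(ρ,σ) ≤ 2(1−δ), then rank σ ≥ 𝒮(ρ,δ). -/

import Mathlib

open scoped BigOperators Classical ComplexOrder

/-- A density matrix: positive semidefinite with trace one. -/
def IsDensity {ι : Type*} [Fintype ι] [DecidableEq ι] (ρ : Matrix ι ι ℂ) : Prop :=
  ρ.PosSemidef ∧ ρ.trace = 1

/-- The trace distance `D(ρ,σ) = Tr|ρ−σ|`: the sum of the absolute values of the
eigenvalues of the Hermitian matrix `ρ − σ` (no factor 1/2). -/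
noncomputable def traceDist {ι : Type*} [Fintype ι] [DecidableEq ι]
    (ρ σ : Matrix ι ι ℂ) : ℝ :=
  if h : (ρ - σ).IsHermitian then ∑ i, |h.eigenvalues i| else 0

/-- The minimal dimension `𝒮(ρ,δ)` of a `δ`-significant subspace: the minimum rank of an
orthogonal projection `P` (`P = Pᴴ = P²`) with `Tr(Pρ) ≥ δ`. -/
noncomputable def sigDim {ι : Type*} [Fintype ι] [DecidableEq ι]
    (ρ : Matrix ι ι ℂ) (δ : ℝ) : ℕ :=
  sInf {m : ℕ | ∃ P : Matrix ι ι ℂ,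
    P.IsHermitian ∧ P * P = P ∧ δ ≤ ((P * ρ).trace).re ∧ P.rank = m}

namespace SigDimAux

open Matrix

variable {ι : Type*} [Fintype ι] [DecidableEq ι]

lemma diag_entry_re_nonneg (M : Matrix ι ι ℂ) (hM : M.PosSemidef) (i : ι) : 0 ≤ (M i i).re := by
  have h := hM.dotProduct_mulVec_nonneg (Pi.single i 1)
  have e : star (Pi.single i 1 : ι → ℂ) ⬝ᵥ M *ᵥ Pi.single i 1 = M i i := by
    simp [dotProduct, mulVec, Pi.single_apply]
  rw [e] at h
  exact (Complex.le_def.mp h).1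

lemma min_formula (a : ℝ) : min a 0 = (a - |a|) / 2 := by
  rcases le_total a 0 with h | h
  · rw [min_eq_left h, abs_of_nonpos h]; ring
  · rw [min_eq_right h, abs_of_nonneg h]; ring

lemma conj_mul (V : Matrix ι ι ℂ) (hV : star V * V = 1) (M N : Matrix ι ι ℂ) :
    (V * M * star V) * (V * N * star V) = V * (M * N) * star V := by
  simp only [Matrix.mul_assoc]
  rw [← Matrix.mul_assoc (star V) V (N * star V), hV, Matrix.one_mul]

lemma trace_conj (V : Matrix ι ι ℂ) (hV : star V * V = 1) (M : Matrix ι ι ℂ) :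
    (V * M * star V).trace = M.trace := by
  rw [trace_mul_cycle, hV, Matrix.one_mul]

end SigDimAux

open Matrix SigDimAux in
/-- if `D(ρ,σ) ≤ 2(1−δ)` then `rank σ ≥ 𝒮(ρ,δ)`. -/
theorem rank_ge_sigDim_of_traceDist_le {ι : Type*} [Fintype ι] [DecidableEq ι] [Nonempty ι]
    (ρ σ : Matrix ι ι ℂ) (hρ : IsDensity ρ) (hσ : IsDensity σ)
    (δ : ℝ) (hδ0 : 0 ≤ δ) (hδ1 : δ ≤ 1)
    (hD : traceDist ρ σ ≤ 2 * (1 - δ)) :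
    sigDim ρ δ ≤ σ.rank := by
  obtain ⟨hρP, hρt⟩ := hρ
  obtain ⟨hσP, hσt⟩ := hσ
  have hsH : σ.IsHermitian := hσP.1
  set μ : ι → ℝ := hsH.eigenvalues with hμ
  set U : Matrix ι ι ℂ := (hsH.eigenvectorUnitary : Matrix ι ι ℂ) with hUdef
  have hU1 : U * star U = 1 := mem_unitaryGroup_iff.mp hsH.eigenvectorUnitary.2
  have hU2 : star U * U = 1 := mem_unitaryGroup_iff'.mp hsH.eigenvectorUnitary.2
  set d : ι → ℂ := fun i => if μ i = 0 then 0 else 1 with hd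
  set P : Matrix ι ι ℂ := U * diagonal d * star U with hP
  have hspec : σ = U * diagonal (Complex.ofReal ∘ μ) * star U := hsH.spectral_theorem
  -- P is Hermitian
  have hdstar : star d = d := by
    funext i; by_cases h : μ i = 0 <;> simp [hd, h]
  have hPH : P.IsHermitian := by
    show Pᴴ = P
    rw [hP, star_eq_conjTranspose, conjTranspose_mul, conjTranspose_mul,
      conjTranspose_conjTranspose, diagonal_conjTranspose, hdstar, Matrix.mul_assoc]
  -- P is idempotent
  have hPP : P * P = P := by
    rw [hP, conj_mul U hU2, diagonal_mul_diagonal]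
    have h1 : (fun i => d i * d i) = d := by
      funext i
      by_cases h : μ i = 0 <;> simp [hd, h]
    rw [h1]
  -- trace of P * σ is 1
  have hPσ : (P * σ).trace = 1 := by
    conv_lhs => rw [hP, hspec, conj_mul U hU2, trace_conj U hU2, diagonal_mul_diagonal]
    have h1 : (fun i => d i * (Complex.ofReal ∘ μ) i) = (Complex.ofReal ∘ μ) := by
      funext i
      by_cases h : μ i = 0 <;> simp [hd, h]
    rw [h1, ← trace_conj U hU2 (diagonal (Complex.ofReal ∘ μ)), ← hspec, hσt]
  -- rank of P equals rank of σ
  have hdetU : IsUnit U.det := by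
    have := congrArg Matrix.det hU1
    rw [det_mul, det_one] at this
    exact IsUnit.of_mul_eq_one _ this
  have hdetUs : IsUnit (star U).det := by
    have := congrArg Matrix.det hU2
    rw [det_mul, det_one] at this
    exact IsUnit.of_mul_eq_one _ this
  have hrank : P.rank = σ.rank := by
    rw [hP, rank_mul_eq_left_of_isUnit_det (star U) _ hdetUs,
      rank_mul_eq_right_of_isUnit_det U _ hdetU, rank_diagonal,
      hsH.rank_eq_card_non_zero_eigs]
    apply Fintype.card_congr
    apply Equiv.subtypeEquivRight
    intro i
    by_cases h : μ i = 0 <;> simp [hd, h, hμ]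
  -- P is PSD, 1 - P is PSD
  have hPsd : P.PosSemidef := by
    have : P = Pᴴ * P := by rw [hPH.eq, hPP]
    rw [this]; exact posSemidef_conjTranspose_mul_self P
  have hQsd : ((1 : Matrix ι ι ℂ) - P).PosSemidef := by
    have h1 : ((1 : Matrix ι ι ℂ) - P)ᴴ = 1 - P := by
      rw [conjTranspose_sub, conjTranspose_one, hPH.eq]
    have : (1 : Matrix ι ι ℂ) - P = ((1 : Matrix ι ι ℂ) - P)ᴴ * (1 - P) := by
      rw [h1, Matrix.sub_mul, Matrix.mul_sub, Matrix.mul_sub, hPP]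
      simp only [Matrix.one_mul, Matrix.mul_one]
      abel
    rw [this]; exact posSemidef_conjTranspose_mul_self _
  -- the trace distance bound
  set A : Matrix ι ι ℂ := ρ - σ with hA
  have hAH : A.IsHermitian := hρP.1.sub hσP.1
  set ν : ι → ℝ := hAH.eigenvalues with hν
  set V : Matrix ι ι ℂ := (hAH.eigenvectorUnitary : Matrix ι ι ℂ) with hVdef
  have hV2 : star V * V = 1 := mem_unitaryGroup_iff'.mp hAH.eigenvectorUnitary.2
  have hAspec : A = V * diagonal (Complex.ofReal ∘ ν) * star V := hAH.spectral_theorem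
  -- trace of A is 0, hence sum of ν is 0
  have htrA : A.trace = 0 := by rw [hA, trace_sub, hρt, hσt, sub_self]
  have hsumν : ∑ i, ν i = 0 := by
    have h1 : A.trace = ∑ i, (ν i : ℂ) := by
      conv_lhs => rw [hAspec, trace_conj V hV2, trace_diagonal]
      simp
    rw [htrA] at h1
    have := h1.symm
    push_cast at this ⊢
    exact_mod_cast this
  -- the conjugated projection Q
  set Q : Matrix ι ι ℂ := star V * P * V with hQ
  have hQpsd : Q.PosSemidef := by
    have := hPsd.conjTranspose_mul_mul_same V
    rwa [← star_eq_conjTranspose] at this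
  have hQle : ∀ i, (Q i i).re ≤ 1 := by
    intro i
    have hpsd2 : (star V * (1 - P) * V).PosSemidef := by
      have := hQsd.conjTranspose_mul_mul_same V
      rwa [← star_eq_conjTranspose] at this
    have hformula : star V * (1 - P) * V = 1 - Q := by
      rw [Matrix.mul_sub, Matrix.sub_mul, Matrix.mul_one, hV2, hQ]
    have := diag_entry_re_nonneg _ (hformula ▸ hpsd2) i
    have hone : ((1 : Matrix ι ι ℂ) i i).re = 1 := by simp
    simp only [Matrix.sub_apply, Complex.sub_re, hone] at this
    linarith
  have hQ0 : ∀ i, 0 ≤ (Q i i).re := fun i => diag_entry_re_nonneg Q hQpsd i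
  -- trace of P * A
  have htrPA : ((P * A).trace).re = ∑ i, (Q i i).re * ν i := by
    have h1 : P * A = P * V * diagonal (Complex.ofReal ∘ ν) * star V := by
      rw [hAspec]; simp only [Matrix.mul_assoc]
    have h2 : (P * A).trace = (Q * diagonal (Complex.ofReal ∘ ν)).trace := by
      rw [h1, trace_mul_cycle, hQ]
      simp only [Matrix.mul_assoc]
    rw [h2]
    rw [Matrix.trace]
    simp only [Matrix.diag, mul_diagonal, Complex.re_sum]
    apply Finset.sum_congr rfl
    intro i _
    simp [Complex.mul_re]
  -- lower bound on trace of P * A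
  have hbound : -(traceDist ρ σ / 2) ≤ ((P * A).trace).re := by
    rw [htrPA]
    have hTD : traceDist ρ σ = ∑ i, |ν i| := by
      rw [traceDist, dif_pos hAH]
    have h1 : ∀ i ∈ Finset.univ, min (ν i) 0 ≤ (Q i i).re * ν i := by
      intro i _
      rcases le_or_gt (ν i) 0 with h | h
      · rw [min_eq_left h]
        calc ν i = 1 * ν i := (one_mul _).symm
          _ ≤ (Q i i).re * ν i := mul_le_mul_of_nonpos_right (hQle i) h
      · rw [min_eq_right h.le]
        exact mul_nonneg (hQ0 i) h.le
    have h2 : ∑ i, min (ν i) 0 = -(traceDist ρ σ / 2) := by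
      rw [hTD]
      have : ∀ i ∈ Finset.univ, min (ν i) 0 = (ν i - |ν i|) / 2 :=
        fun i _ => min_formula (ν i)
      rw [Finset.sum_congr rfl this, ← Finset.sum_div, Finset.sum_sub_distrib, hsumν]
      ring
    calc -(traceDist ρ σ / 2) = ∑ i, min (ν i) 0 := h2.symm
      _ ≤ ∑ i, (Q i i).re * ν i := Finset.sum_le_sum h1
  -- conclude the trace condition
  have hTr : δ ≤ ((P * ρ).trace).re := by
    have hsplit : P * ρ = P * σ + P * A := by
      rw [hA, Matrix.mul_sub]; abel
    rw [hsplit, trace_add, Complex.add_re]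
    have h1 : ((P * σ).trace).re = 1 := by rw [hPσ]; simp
    rw [h1]
    have : traceDist ρ σ / 2 ≤ 1 - δ := by linarith
    linarith [hbound]
  -- finish
  apply Nat.sInf_le
  exact ⟨P, hPH, hPP, hTr, hrank⟩
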